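/- For every real x ∈ (2, N) with N > 2, there exists t₀ ∈ ℕ such that for all t ≥ t₀, A_t(x)/A_t(N) ≤ (x/N)^t. -/

import Mathlib

/-- The dilated Chebyshev polynomials of the second kind:
`A 0 = 1`, `A 1 = X`, and `A (t+2) = X * A (t+1) - A t`
(equivalently `A 1 * A t = A (t+1) + A (t-1)` for `t ≥ 1`). -/
noncomputable def dilA : ℕ → Polynomial ℝ
  | 0 => 1
  | 1 => Polynomial.X
  | (t + 2) => Polynomial.X * dilA (t + 1) - dilA t

lemma dilA_mul (y u : ℝ) (hu : y * u = 1) (t : ℕ) :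
    (dilA t).eval (y + u) * (y - u) = y ^ (t + 1) - u ^ (t + 1) := by
  induction t using Nat.twoStepInduction with
  | zero => simp [dilA]
  | one => simp [dilA]; ring
  | more t ih1 ih2 =>
    show (dilA (t + 2)).eval _ * _ = _
    rw [dilA]
    simp only [Polynomial.eval_sub, Polynomial.eval_mul, Polynomial.eval_X]
    linear_combination (y + u) * ih2 - ih1 + (y ^ (t + 1) - u ^ (t + 1)) * hu

lemma yv_facts (x : ℝ) (hx : 2 < x) :
    ∃ y u : ℝ, 1 < y ∧ 0 < u ∧ u < 1 ∧ y * u = 1 ∧ y + u = x ∧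
      y - u = Real.sqrt (x ^ 2 - 4) ∧ 0 < Real.sqrt (x ^ 2 - 4) ∧
      y = (x + Real.sqrt (x ^ 2 - 4)) / 2 := by
  set s := Real.sqrt (x ^ 2 - 4) with hs
  have hs2 : s ^ 2 = x ^ 2 - 4 := Real.sq_sqrt (by nlinarith)
  have hsnn : 0 ≤ s := Real.sqrt_nonneg _
  have hslt : s < x := by
    nlinarith
  refine ⟨(x + s) / 2, (x - s) / 2, by nlinarith, by nlinarith, ?_, by nlinarith,
    by ring, by ring, ?_, rfl⟩
  · nlinarith
  · nlinarith

set_option maxHeartbeats 1000000 in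
theorem dilA_ratio_eventually_le (N x : ℝ) (hN : 2 < N) (hx : 2 < x) (hxN : x < N) :
    ∃ t₀ : ℕ, ∀ t : ℕ, t₀ ≤ t →
      (dilA t).eval x / (dilA t).eval N ≤ (x / N) ^ t := by
  obtain ⟨yx, ux, hyx1, hux0, hux1, hyux, hsumx, hdiffx, hsx, hyxeq⟩ := yv_facts x hx
  obtain ⟨yN, uN, hyN1, huN0, huN1, hyuN, hsumN, hdiffN, hsN, hyNeq⟩ := yv_facts N hN
  have hyx0 : 0 < yx := by linarith
  have hyN0 : 0 < yN := by linarith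
  have hN0 : 0 < N := by linarith
  have hx0 : 0 < x := by linarith
  -- closed forms
  have hcx : ∀ t : ℕ, (dilA t).eval x = (yx ^ (t + 1) - ux ^ (t + 1)) / (yx - ux) := by
    intro t
    rw [eq_div_iff (by linarith : yx - ux ≠ 0), ← hsumx]
    exact dilA_mul yx ux hyux t
  have hcN : ∀ t : ℕ, (dilA t).eval N = (yN ^ (t + 1) - uN ^ (t + 1)) / (yN - uN) := by
    intro t
    rw [eq_div_iff (by linarith : yN - uN ≠ 0), ← hsumN]
    exact dilA_mul yN uN hyuN t
  -- bounds
  have hub : ∀ t : ℕ, (dilA t).eval x ≤ yx ^ (t + 1) / (yx - ux) := by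
    intro t
    rw [hcx t]
    apply div_le_div_of_nonneg_right ?_ (by linarith)
    · nlinarith [pow_pos hux0 (t + 1)]
  have hlb : ∀ t : ℕ, yN ^ t * (yN - 1) / (yN - uN) ≤ (dilA t).eval N := by
    intro t
    rw [hcN t]
    apply div_le_div_of_nonneg_right ?_ (by linarith)
    · have h1 : uN ^ (t + 1) ≤ 1 := pow_le_one₀ (le_of_lt huN0) (le_of_lt huN1)
      have h2 : (1 : ℝ) ≤ yN ^ t := one_le_pow₀ (le_of_lt hyN1)
      calc yN ^ t * (yN - 1) = yN ^ (t + 1) - yN ^ t := by ring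
        _ ≤ yN ^ (t + 1) - uN ^ (t + 1) := by nlinarith
  have hlb0 : ∀ t : ℕ, 0 < yN ^ t * (yN - 1) / (yN - uN) := by
    intro t
    have := pow_pos hyN0 t
    apply div_pos (by nlinarith) (by linarith)
  -- q < r
  have hmono : yx * N < yN * x := by
    have hsq : (N * Real.sqrt (x ^ 2 - 4)) ^ 2 < (x * Real.sqrt (N ^ 2 - 4)) ^ 2 := by
      rw [mul_pow, mul_pow, Real.sq_sqrt (by nlinarith), Real.sq_sqrt (by nlinarith)]
      nlinarith
    have h2 : N * Real.sqrt (x ^ 2 - 4) < x * Real.sqrt (N ^ 2 - 4) :=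
      lt_of_pow_lt_pow_left₀ 2 (by positivity) hsq
    rw [hyxeq, hyNeq]
    nlinarith
  set q := yx / yN with hq
  set r := x / N with hr
  have hq0 : 0 < q := div_pos hyx0 hyN0
  have hr0 : 0 < r := div_pos hx0 hN0
  have hqr : q < r := by
    rw [hq, hr, div_lt_div_iff₀ hyN0 hN0]
    nlinarith
  set K := yx * (yN - uN) / ((yx - ux) * (yN - 1)) with hK
  have hK0 : 0 < K := by
    apply div_pos (mul_pos hyx0 (by linarith)) (mul_pos (by linarith) (by linarith))
  -- ratio bound
  have hratio : ∀ t : ℕ, (dilA t).eval x / (dilA t).eval N ≤ K * q ^ t := by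
    intro t
    have step : (dilA t).eval x / (dilA t).eval N ≤
        (yx ^ (t + 1) / (yx - ux)) / (yN ^ t * (yN - 1) / (yN - uN)) := by
      exact div_le_div₀ (le_of_lt (div_pos (pow_pos hyx0 _) (by linarith))) (hub t) (hlb0 t) (hlb t)
    refine step.trans_eq ?_
    rw [hq, div_pow]
    have h1 : yx - ux ≠ 0 := by linarith
    have h2 : yN - uN ≠ 0 := by linarith
    have h3 : yN - 1 ≠ 0 := by linarith
    have h4 : yN ^ t ≠ 0 := by positivity
    rw [hK]
    field_simp
    ring
  -- pick t₀
  have hqrlt : q / r < 1 := (div_lt_one hr0).2 hqr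
  have hqrnn : 0 ≤ q / r := le_of_lt (div_pos hq0 hr0)
  obtain ⟨t₀, ht₀⟩ := exists_pow_lt_of_lt_one (show (0:ℝ) < 1 / K by positivity) hqrlt
  refine ⟨t₀, fun t ht => ?_⟩
  refine (hratio t).trans ?_
  have h5 : (q / r) ^ t ≤ (q / r) ^ t₀ := pow_le_pow_of_le_one hqrnn (le_of_lt hqrlt) ht
  have h6 : K * (q / r) ^ t ≤ 1 := by
    calc K * (q / r) ^ t ≤ K * (q / r) ^ t₀ := by nlinarith
      _ ≤ K * (1 / K) := by nlinarith
      _ = 1 := by field_simp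
  have hqe : q ^ t = (q / r) ^ t * r ^ t := by
    rw [← mul_pow, div_mul_cancel₀ q (ne_of_gt hr0)]
  calc K * q ^ t = (K * (q / r) ^ t) * r ^ t := by rw [hqe]; ring
    _ ≤ 1 * r ^ t := by nlinarith [pow_pos hr0 t]
    _ = r ^ t := one_mul _
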